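/- Let f:[s₀,∞)→ℝ be a bounded differentiable function satisfying the ODE f'(s) - (k/s) f(s) = g(s) for all s ≥ s₀, where k > 0 and g(s) = O(s⁻²) (i.e. there is C > 0 with |g(s)| ≤ C s⁻² for all s ≥ s₀). Then f(s) = O(s⁻¹), i.e. there exists C' > 0 such that |f(s)| ≤ C' s⁻¹ for all s ≥ s₀. -/

import Mathlib

open MeasureTheory intervalIntegral Filter

/-- ODE decay lemma: a bounded solution of `f' - (k/s) f = g` with `g = O(s⁻²)`
satisfies `f = O(s⁻¹)` on `[s₀, ∞)`. -/
theorem stmt0 (s₀ k C : ℝ) (hs₀ : 0 < s₀) (hk : 0 < k) (hC : 0 < C)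
    (f g : ℝ → ℝ)
    (hbdd : ∃ M : ℝ, ∀ s ≥ s₀, |f s| ≤ M)
    (hode : ∀ s ≥ s₀, HasDerivAt f (k / s * f s + g s) s)
    (hg : ∀ s ≥ s₀, |g s| ≤ C / s ^ 2) :
    ∃ C' > 0, ∀ s ≥ s₀, |f s| ≤ C' / s := by
  obtain ⟨M, hM⟩ := hbdd
  set h : ℝ → ℝ := fun t => f t * t ^ (-k) with hh
  have hpos : ∀ t : ℝ, s₀ ≤ t → 0 < t := fun t ht => lt_of_lt_of_le hs₀ ht
  -- derivative of h
  have hderiv : ∀ t, s₀ ≤ t → HasDerivAt h (t ^ (-k) * g t) t := by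
    intro t ht
    have ht0 : 0 < t := hpos t ht
    have h1 : HasDerivAt (fun x : ℝ => x ^ (-k)) (-k * t ^ (-k - 1)) t :=
      Real.hasDerivAt_rpow_const (Or.inl ht0.ne')
    have h2 := (hode t ht).mul h1
    refine h2.congr_deriv ?_
    have htk : t ^ (-k - 1) = t ^ (-k) / t := by
      rw [Real.rpow_sub ht0, Real.rpow_one]
    rw [htk]
    field_simp
    ring
  have hcont : ContinuousOn f (Set.Ici s₀) :=
    fun t ht => ((hode t ht).continuousAt).continuousWithinAt
  -- key estimate
  set c : ℝ := C / (k + 1) with hc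
  have hc0 : 0 < c := div_pos hC (by linarith)
  have key : ∀ s, s₀ ≤ s → |h s| ≤ c * s ^ (-k - 1) := by
    intro s hs
    have hs0 : 0 < s := hpos s hs
    have step : ∀ T, s ≤ T → |h s| ≤ M * T ^ (-k) + c * s ^ (-k - 1) := by
      intro T hT
      have hT0 : 0 < T := lt_of_lt_of_le hs0 hT
      have hsub : Set.uIcc s T ⊆ Set.Ici s₀ := by
        rw [Set.uIcc_of_le hT]
        intro x hx
        exact le_trans hs hx.1
      -- integrability of the derivative on [s, T]
      have hIoc : Set.Ioc s T ⊆ Set.Ici s₀ := fun x hx => le_trans hs (le_of_lt hx.1)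
      have hmeas : AEStronglyMeasurable (fun t => t ^ (-k) * g t)
          (volume.restrict (Set.uIoc s T)) := by
        rw [Set.uIoc_of_le hT]
        have hgm : AEStronglyMeasurable g (volume.restrict (Set.Ioc s T)) := by
          have : ∀ t ∈ Set.Ioc s T, g t = deriv f t - k / t * f t := by
            intro t ht
            rw [(hode t (hIoc ht)).deriv]; ring
          have hd : AEStronglyMeasurable (fun t => deriv f t - k / t * f t)
              (volume.restrict (Set.Ioc s T)) := by
            apply AEStronglyMeasurable.sub
            · exact (measurable_deriv f).aestronglyMeasurable
            · exact AEStronglyMeasurable.mul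
                (Measurable.aestronglyMeasurable (measurable_const.div measurable_id))
                ((hcont.mono hIoc).aestronglyMeasurable measurableSet_Ioc)
          refine hd.congr ?_
          filter_upwards [ae_restrict_mem measurableSet_Ioc] with t ht
          exact (this t ht).symm
        exact AEStronglyMeasurable.mul
          ((measurable_id.pow_const (-k)).aestronglyMeasurable) hgm
      have hbound : IntervalIntegrable (fun t => C * t ^ (-k - 2)) volume s T := by
        apply ContinuousOn.intervalIntegrable
        apply ContinuousOn.mul continuousOn_const
        intro t ht
        have ht0 : 0 < t := hpos t (hsub ht)
        exact (Real.continuousAt_rpow_const t _ (Or.inl ht0.ne')).continuousWithinAt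
      have hle : ∀ᵐ t ∂(volume.restrict (Set.uIoc s T)),
          ‖t ^ (-k) * g t‖ ≤ C * t ^ (-k - 2) := by
        filter_upwards [ae_restrict_mem measurableSet_uIoc] with t ht
        rw [Set.uIoc_of_le hT] at ht
        have ht₀ : s₀ ≤ t := hIoc ht
        have ht0 : 0 < t := hpos t ht₀
        have hgk := hg t ht₀
        have hrk : (0:ℝ) < t ^ (-k) := Real.rpow_pos_of_pos ht0 _
        calc ‖t ^ (-k) * g t‖ = t ^ (-k) * |g t| := by
              rw [Real.norm_eq_abs, abs_mul, abs_of_pos hrk]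
          _ ≤ t ^ (-k) * (C / t ^ 2) := by
              exact mul_le_mul_of_nonneg_left hgk hrk.le
          _ = C * t ^ (-k - 2) := by
              rw [Real.rpow_sub ht0]
              rw [show (2:ℝ) = ((2:ℕ):ℝ) by norm_num, Real.rpow_natCast]
              field_simp
      have hint : IntervalIntegrable (fun t => t ^ (-k) * g t) volume s T := by
        refine hbound.mono_fun hmeas ?_
        filter_upwards [hle] with t ht
        refine le_trans ht ?_
        exact le_abs_self _
      -- FTC
      have hftc : ∫ t in s..T, t ^ (-k) * g t = h T - h s := by
        apply intervalIntegral.integral_eq_sub_of_hasDerivAt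
        · intro t ht
          exact hderiv t (hsub ht)
        · exact hint
      -- bound on integral
      have hIbd : ‖∫ t in s..T, t ^ (-k) * g t‖ ≤ |∫ t in s..T, C * t ^ (-k - 2)| := by
        apply intervalIntegral.norm_integral_le_abs_of_norm_le hle hbound
      have hIval : ∫ t in s..T, C * t ^ (-k - 2)
          = C * ((T ^ (-k - 1) - s ^ (-k - 1)) / (-k - 1)) := by
        rw [intervalIntegral.integral_const_mul]
        rw [integral_rpow (Or.inr ⟨by linarith, by
          rw [Set.uIcc_of_le hT]; intro hx; exact absurd hx.1 (not_le.mpr hs0)⟩)]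
        rw [show -k - 2 + 1 = -k - 1 by ring]
      have hIval2 : |∫ t in s..T, C * t ^ (-k - 2)| ≤ c * s ^ (-k - 1) := by
        rw [hIval, hc]
        have hTp : (0:ℝ) < T ^ (-k - 1) := Real.rpow_pos_of_pos hT0 _
        have hsp : (0:ℝ) < s ^ (-k - 1) := Real.rpow_pos_of_pos hs0 _
        have hTs : T ^ (-k - 1) ≤ s ^ (-k - 1) :=
          Real.rpow_le_rpow_of_nonpos hs0 hT (by linarith)
        have e : (T ^ (-k - 1) - s ^ (-k - 1)) / (-k - 1)
            = (s ^ (-k - 1) - T ^ (-k - 1)) / (k + 1) := by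
          rw [show -k - 1 = -(k + 1) by ring, div_neg, ← neg_div, neg_sub]
        rw [e, abs_of_nonneg (mul_nonneg hC.le
          (div_nonneg (by linarith) (by linarith)))]
        rw [div_mul_eq_mul_div, ← mul_div_assoc]
        apply div_le_div_of_nonneg_right ?_ (by linarith)
        nlinarith
      have hH : |h T| ≤ M * T ^ (-k) := by
        have := hM T (le_trans hs hT)
        have hrk : (0:ℝ) < T ^ (-k) := Real.rpow_pos_of_pos hT0 _
        calc |h T| = |f T| * T ^ (-k) := by
              rw [hh]; simp only; rw [abs_mul, abs_of_pos hrk]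
          _ ≤ M * T ^ (-k) := mul_le_mul_of_nonneg_right this hrk.le
      have h4 : |h T - h s| ≤ c * s ^ (-k - 1) := by
        rw [← hftc, ← Real.norm_eq_abs]
        exact hIbd.trans hIval2
      have h3 : |h s| ≤ |h T| + |h T - h s| := by
        have e2 : h T + (h s - h T) = h s := by ring
        calc |h s| = |h T + (h s - h T)| := by rw [e2]
          _ ≤ |h T| + |h s - h T| := abs_add_le _ _
          _ = |h T| + |h T - h s| := by rw [abs_sub_comm]
      linarith
    -- take T → ∞
    have hlim : Tendsto (fun T : ℝ => M * T ^ (-k) + c * s ^ (-k - 1)) atTop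
        (nhds (M * 0 + c * s ^ (-k - 1))) := by
      exact Tendsto.add ((tendsto_rpow_neg_atTop hk).const_mul M) tendsto_const_nhds
    have : |h s| ≤ M * 0 + c * s ^ (-k - 1) := by
      apply ge_of_tendsto hlim
      filter_upwards [eventually_ge_atTop s] with T hT
      exact step T hT
    linarith
  refine ⟨c, hc0, fun s hs => ?_⟩
  have hs0 : 0 < s := hpos s hs
  have hks : (0:ℝ) < s ^ (-k) := Real.rpow_pos_of_pos hs0 _
  have h1 : |f s| * s ^ (-k) ≤ c * s ^ (-k - 1) := by
    have := key s hs
    rw [hh] at this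
    simp only at this
    rwa [abs_mul, abs_of_pos hks] at this
  have h2 : s ^ (-k - 1) = s ^ (-k) / s := by
    rw [Real.rpow_sub hs0, Real.rpow_one]
  rw [h2] at h1
  have h3 : c * (s ^ (-k) / s) = (c / s) * s ^ (-k) := by ring
  rw [h3] at h1
  exact le_of_mul_le_mul_right h1 hks
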